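/- Let $\mathcal{O}$ be finite, $\gamma \in [0,1)$, and fix a policy $\pi$. Suppose rewards satisfy $|r(o,a,\mu)| \le R_{\max}$ and are $L_r$-Lipschitz in $\mu$ w.r.t. the $\ell_1$ distance $\mathcal{W}_1(\mu,\nu) = \sum_o |\mu(o)-\nu(o)|$, and transition kernels satisfy $\mathcal{W}_1(P(\cdot|o,a,\mu), P(\cdot|o,a,\mu')) \le L_P \mathcal{W}_1(\mu,\mu')$. Given two trajectories $\{\mu_t\}, \{\mu_t'\}$ in $\Delta(\mathcal{O})$ with $\max_t \mathcal{W}_1(\mu_t,\mu_t') = d$, let $V_\pi(o,\mu_t)$ and $V_\pi(o,\mu_t')$ be the bounded solutions of the Bellman equations $V_\pi(o,\mu_t) = \sum_a \pi(a|o)[r(o,a,\mu_t) + \gamma \sum_{o'} P(o'|o,a,\mu_t) V_\pi(o',\mu_{t+1})]$ along each trajectory. Then $\sup_{o,t} |V_\pi(o,\mu_t) - V_\pi(o,\mu_t')| \le \frac{L_r + \gamma L_P R_{\max}/(1-\gamma)}{1-\gamma} \cdot d$. -/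

import Mathlib

open Finset

theorem stmt1 {O A : Type*} [Fintype O] [Fintype A]
    (γ : ℝ) (hγ0 : 0 ≤ γ) (hγ1 : γ < 1)
    (π : O → A → ℝ) (hπ0 : ∀ o a, 0 ≤ π o a) (hπ1 : ∀ o, ∑ a, π o a = 1)
    (r : O → A → (O → ℝ) → ℝ) (Rmax : ℝ)
    (hr : ∀ o a ν, |r o a ν| ≤ Rmax)
    (Lr : ℝ)
    (hrLip : ∀ o a ν ν', |r o a ν - r o a ν'| ≤ Lr * ∑ x, |ν x - ν' x|)
    (P : O → A → (O → ℝ) → O → ℝ)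
    (hP0 : ∀ o a ν o', 0 ≤ P o a ν o') (hP1 : ∀ o a ν, ∑ o', P o a ν o' = 1)
    (LP : ℝ)
    (hPLip : ∀ o a ν ν', ∑ o', |P o a ν o' - P o a ν' o'| ≤ LP * ∑ x, |ν x - ν' x|)
    (μ μ' : ℕ → O → ℝ)
    (hμΔ : ∀ t, (∀ o, 0 ≤ μ t o) ∧ ∑ o, μ t o = 1)
    (hμ'Δ : ∀ t, (∀ o, 0 ≤ μ' t o) ∧ ∑ o, μ' t o = 1)
    (d : ℝ)
    (hd : ∀ t, ∑ o, |μ t o - μ' t o| ≤ d)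
    (V V' : O → ℕ → ℝ)
    (hVbd : ∀ o t, |V o t| ≤ Rmax / (1 - γ))
    (hV'bd : ∀ o t, |V' o t| ≤ Rmax / (1 - γ))
    (hV : ∀ o t, V o t = ∑ a, π o a * (r o a (μ t)
      + γ * ∑ o', P o a (μ t) o' * V o' (t + 1)))
    (hV' : ∀ o t, V' o t = ∑ a, π o a * (r o a (μ' t)
      + γ * ∑ o', P o a (μ' t) o' * V' o' (t + 1))) :
    ∀ o t, |V o t - V' o t| ≤ (Lr + γ * LP * Rmax / (1 - γ)) / (1 - γ) * d := by
  -- O is nonempty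
  rcases isEmpty_or_nonempty O with hO | hO
  · exfalso
    have h := (hμΔ 0).2
    rw [Finset.univ_eq_empty, Finset.sum_empty] at h
    norm_num at h
  rcases isEmpty_or_nonempty A with hA | hA
  · exfalso
    obtain ⟨o₀⟩ := hO
    have h := hπ1 o₀
    rw [Finset.univ_eq_empty, Finset.sum_empty] at h
    norm_num at h
  obtain ⟨o₀⟩ := hO
  obtain ⟨a₀⟩ := hA
  have h1γ : (0:ℝ) < 1 - γ := by linarith
  set K : ℝ := Rmax / (1 - γ) with hKdef
  have hK0 : 0 ≤ K := le_trans (abs_nonneg _) (hVbd o₀ 0)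
  have hd0 : 0 ≤ d :=
    le_trans (Finset.sum_nonneg fun _ _ => abs_nonneg _) (hd 0)
  have hcard : (0:ℝ) < (Fintype.card O : ℝ) := by
    have : Nonempty O := ⟨o₀⟩
    exact_mod_cast Fintype.card_pos
  have hsum01 : ∑ x : O, |(fun _ => (0:ℝ)) x - (fun _ => (1:ℝ)) x| = (Fintype.card O : ℝ) := by
    simp [Finset.card_univ]
  have hLr0 : 0 ≤ Lr := by
    have h := hrLip o₀ a₀ (fun _ => (0:ℝ)) (fun _ => (1:ℝ))
    rw [hsum01] at h
    nlinarith [abs_nonneg (r o₀ a₀ (fun _ => (0:ℝ)) - r o₀ a₀ (fun _ => (1:ℝ)))]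
  have hLP0 : 0 ≤ LP := by
    have h := hPLip o₀ a₀ (fun _ => (0:ℝ)) (fun _ => (1:ℝ))
    rw [hsum01] at h
    nlinarith [Finset.sum_nonneg (fun o' (_ : o' ∈ Finset.univ) =>
      abs_nonneg (P o₀ a₀ (fun _ => (0:ℝ)) o' - P o₀ a₀ (fun _ => (1:ℝ)) o'))]
  set c : ℝ := Lr * d + γ * (LP * d * K) with hcdef
  -- key one-step estimate
  have key : ∀ (t : ℕ) (B : ℝ), (∀ o, |V o (t+1) - V' o (t+1)| ≤ B) →
      ∀ o, |V o t - V' o t| ≤ Lr * d + γ * (LP * d * K + B) := by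
    intro t B hB o
    rw [hV o t, hV' o t, ← Finset.sum_sub_distrib]
    calc |∑ a, (π o a * (r o a (μ t) + γ * ∑ o', P o a (μ t) o' * V o' (t + 1))
            - π o a * (r o a (μ' t) + γ * ∑ o', P o a (μ' t) o' * V' o' (t + 1)))|
        ≤ ∑ a, |π o a * (r o a (μ t) + γ * ∑ o', P o a (μ t) o' * V o' (t + 1))
            - π o a * (r o a (μ' t) + γ * ∑ o', P o a (μ' t) o' * V' o' (t + 1))| :=
          Finset.abs_sum_le_sum_abs _ _
      _ ≤ ∑ a, π o a * (Lr * d + γ * (LP * d * K + B)) := by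
          apply Finset.sum_le_sum
          intro a _
          rw [← mul_sub, abs_mul, abs_of_nonneg (hπ0 o a)]
          apply mul_le_mul_of_nonneg_left ?_ (hπ0 o a)
          have hrd : |r o a (μ t) - r o a (μ' t)| ≤ Lr * d :=
            le_trans (hrLip o a (μ t) (μ' t))
              (mul_le_mul_of_nonneg_left (hd t) hLr0)
          have hSdecomp : ∑ o', P o a (μ t) o' * V o' (t + 1)
              - ∑ o', P o a (μ' t) o' * V' o' (t + 1)
              = ∑ o', (P o a (μ t) o' * (V o' (t+1) - V' o' (t+1))
                + (P o a (μ t) o' - P o a (μ' t) o') * V' o' (t+1)) := by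
            rw [← Finset.sum_sub_distrib]
            apply Finset.sum_congr rfl
            intro o' _
            ring
          have hS : |∑ o', P o a (μ t) o' * V o' (t + 1)
              - ∑ o', P o a (μ' t) o' * V' o' (t + 1)| ≤ B + LP * d * K := by
            rw [hSdecomp]
            calc |∑ o', (P o a (μ t) o' * (V o' (t+1) - V' o' (t+1))
                  + (P o a (μ t) o' - P o a (μ' t) o') * V' o' (t+1))|
                ≤ ∑ o', |P o a (μ t) o' * (V o' (t+1) - V' o' (t+1))
                  + (P o a (μ t) o' - P o a (μ' t) o') * V' o' (t+1)| :=
                  Finset.abs_sum_le_sum_abs _ _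
              _ ≤ ∑ o', (P o a (μ t) o' * B + |P o a (μ t) o' - P o a (μ' t) o'| * K) := by
                  apply Finset.sum_le_sum
                  intro o' _
                  refine le_trans (abs_add_le _ _) (add_le_add ?_ ?_)
                  · rw [abs_mul, abs_of_nonneg (hP0 o a (μ t) o')]
                    exact mul_le_mul_of_nonneg_left (hB o') (hP0 o a (μ t) o')
                  · rw [abs_mul]
                    exact mul_le_mul_of_nonneg_left (hV'bd o' (t+1)) (abs_nonneg _)
              _ = B + (∑ o', |P o a (μ t) o' - P o a (μ' t) o'|) * K := by
                  rw [Finset.sum_add_distrib, ← Finset.sum_mul, ← Finset.sum_mul,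
                    hP1 o a (μ t), one_mul]
              _ ≤ B + LP * d * K := by
                  have h1 : ∑ o', |P o a (μ t) o' - P o a (μ' t) o'| ≤ LP * d :=
                    le_trans (hPLip o a (μ t) (μ' t))
                      (mul_le_mul_of_nonneg_left (hd t) hLP0)
                  exact add_le_add_right (mul_le_mul_of_nonneg_right h1 hK0) _
          calc |(r o a (μ t) + γ * ∑ o', P o a (μ t) o' * V o' (t + 1))
              - (r o a (μ' t) + γ * ∑ o', P o a (μ' t) o' * V' o' (t + 1))|
              = |(r o a (μ t) - r o a (μ' t))
                + γ * (∑ o', P o a (μ t) o' * V o' (t + 1)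
                  - ∑ o', P o a (μ' t) o' * V' o' (t + 1))| := by ring_nf
            _ ≤ |r o a (μ t) - r o a (μ' t)|
                + |γ * (∑ o', P o a (μ t) o' * V o' (t + 1)
                  - ∑ o', P o a (μ' t) o' * V' o' (t + 1))| := abs_add_le _ _
            _ ≤ Lr * d + γ * (LP * d * K + B) := by
                apply add_le_add hrd
                rw [abs_mul, abs_of_nonneg hγ0]
                have := mul_le_mul_of_nonneg_left hS hγ0
                linarith
      _ = Lr * d + γ * (LP * d * K + B) := by
          rw [← Finset.sum_mul, hπ1 o, one_mul]
  -- iterate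
  have ind : ∀ (n : ℕ) (o : O) (t : ℕ),
      |V o t - V' o t| ≤ c * ∑ k ∈ Finset.range n, γ ^ k + γ ^ n * (2 * K) := by
    intro n
    induction n with
    | zero =>
        intro o t
        simp only [Finset.range_zero, Finset.sum_empty, mul_zero, pow_zero, one_mul, zero_add]
        calc |V o t - V' o t| ≤ |V o t| + |V' o t| := abs_sub _ _
          _ ≤ 2 * K := by have := hVbd o t; have := hV'bd o t; linarith
    | succ n ih =>
        intro o t
        have hkey := key t (c * ∑ k ∈ Finset.range n, γ ^ k + γ ^ n * (2 * K))
          (fun o' => ih o' (t+1)) o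
        have : Lr * d + γ * (LP * d * K
            + (c * ∑ k ∈ Finset.range n, γ ^ k + γ ^ n * (2 * K)))
            = c * ∑ k ∈ Finset.range (n+1), γ ^ k + γ ^ (n+1) * (2 * K) := by
          rw [geom_sum_succ]
          ring
        linarith
  intro o t
  have hlim : Filter.Tendsto
      (fun n => c * ∑ k ∈ Finset.range n, γ ^ k + γ ^ n * (2 * K))
      Filter.atTop (nhds (c * (1 - γ)⁻¹ + 0 * (2 * K))) := by
    apply Filter.Tendsto.add
    · exact (hasSum_geometric_of_lt_one hγ0 hγ1).tendsto_sum_nat.const_mul c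
    · exact (tendsto_pow_atTop_nhds_zero_of_lt_one hγ0 hγ1).mul_const _
  have hle : |V o t - V' o t| ≤ c * (1 - γ)⁻¹ + 0 * (2 * K) :=
    ge_of_tendsto' hlim (fun n => ind n o t)
  have heq : c * (1 - γ)⁻¹ + 0 * (2 * K)
      = (Lr + γ * LP * Rmax / (1 - γ)) / (1 - γ) * d := by
    rw [hcdef, hKdef]
    field_simp
    ring
  linarith [heq ▸ hle]
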